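/- Let X be the 2-complex of the presentation ⟨a, c | U(a,c), [a,c^n]⟩ where U(a,c) = a^{α_1}c^{γ_1}⋯a^{α_k}c^{γ_k} with Σα_i = 1 and Σγ_i = 0. Then the Schur multiplier H_2(π_1(X); ℤ) is trivial. -/

import Mathlib

/-- The word `U(a,c) = a^{α₁}c^{γ₁}⋯a^{α_k}c^{γ_k}` in the free group on `{a, c}`
(with `a` coded by `true` and `c` by `false`). -/
def Uword (k : ℕ) (α γ : ℕ → ℤ) : FreeGroup Bool :=
  ((List.range k).map fun i =>
    (FreeGroup.of true) ^ (α i) * (FreeGroup.of false) ^ (γ i)).prod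

/-- The relators of the presentation `X = ⟨a, c ∣ U(a,c), [a,cⁿ]⟩`. -/
def relsX (n k : ℕ) (α γ : ℕ → ℤ) : Set (FreeGroup Bool) :=
  {Uword k α γ,
    (FreeGroup.of true)⁻¹ * ((FreeGroup.of false) ^ n)⁻¹ *
      FreeGroup.of true * (FreeGroup.of false) ^ n}

namespace SchurAux

/-- The exponent sum of `a` (coded by `true`). -/
def sigma : FreeGroup Bool →* Multiplicative ℤ :=
  FreeGroup.lift (fun b => Multiplicative.ofAdd (if b then 1 else 0))

lemma sigma_a : sigma (FreeGroup.of true) = Multiplicative.ofAdd 1 := by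
  simp [sigma]

lemma sigma_c : sigma (FreeGroup.of false) = 1 := by
  simp [sigma]

lemma sigma_Uword (k : ℕ) (α γ : ℕ → ℤ) :
    sigma (Uword k α γ) = Multiplicative.ofAdd (∑ i ∈ Finset.range k, α i) := by
  induction k with
  | zero => simp [Uword]
  | succ k ih =>
    rw [Uword, List.range_succ, List.map_append, List.prod_append]
    simp only [List.map_cons, List.map_nil, List.prod_cons, List.prod_nil, mul_one]
    rw [map_mul, map_mul, map_zpow, map_zpow, sigma_a, sigma_c]
    rw [Uword] at ih
    rw [ih, Finset.sum_range_succ, one_zpow, mul_one, ← ofAdd_zsmul, smul_eq_mul, mul_one,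
      ← ofAdd_add]

lemma commutator_le_ker : commutator (FreeGroup Bool) ≤ sigma.ker := by
  rw [commutator_def, Subgroup.commutator_le]
  intro g _ h _
  rw [MonoidHom.mem_ker, map_commutatorElement, commutatorElement_eq_one_iff_mul_comm]
  exact mul_comm _ _

end SchurAux

open scoped commutatorElement

open SchurAux in
theorem schur_multiplier_trivial (n k : ℕ) (α γ : ℕ → ℤ)
    (hα : ∑ i ∈ Finset.range k, α i = 1) (hγ : ∑ i ∈ Finset.range k, γ i = 0) :
    Subgroup.normalClosure (relsX n k α γ) ⊓ commutator (FreeGroup Bool) =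
      ⁅(⊤ : Subgroup (FreeGroup Bool)), Subgroup.normalClosure (relsX n k α γ)⁆ := by
  classical
  set a : FreeGroup Bool := FreeGroup.of true with ha
  set c : FreeGroup Bool := FreeGroup.of false with hc
  set R : Subgroup (FreeGroup Bool) := Subgroup.normalClosure (relsX n k α γ) with hRdef
  set K : Subgroup (FreeGroup Bool) := ⁅(⊤ : Subgroup (FreeGroup Bool)), R⁆ with hKdef
  haveI : R.Normal := Subgroup.normalClosure_normal
  haveI : K.Normal := Subgroup.commutator_normal ⊤ R
  set π : FreeGroup Bool →* FreeGroup Bool ⧸ K := QuotientGroup.mk' K with hπ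
  have hπsurj : Function.Surjective π := QuotientGroup.mk'_surjective K
  have hKone : ∀ {x : FreeGroup Bool}, x ∈ K → π x = 1 := fun hx =>
    (QuotientGroup.eq_one_iff _).2 hx
  -- elements of R become central in the quotient
  have hcentral : ∀ r ∈ R, π r ∈ Subgroup.center (FreeGroup Bool ⧸ K) := by
    intro r hr
    rw [Subgroup.mem_center_iff]
    intro g
    obtain ⟨f, rfl⟩ := hπsurj g
    have hmem : ⁅f, r⁆ ∈ K := Subgroup.commutator_mem_commutator (Subgroup.mem_top f) hr
    have h1 : π ⁅f, r⁆ = 1 := hKone hmem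
    rw [map_commutatorElement] at h1
    exact commutatorElement_eq_one_iff_mul_comm.1 h1
  have hUmem : Uword k α γ ∈ R := Subgroup.subset_normalClosure (Set.mem_insert _ _)
  have hVmem : a⁻¹ * (c ^ n)⁻¹ * a * c ^ n ∈ R :=
    Subgroup.subset_normalClosure (Set.mem_insert_iff.2 (Or.inr rfl))
  set u : FreeGroup Bool ⧸ K := π (Uword k α γ) with hu
  set v : FreeGroup Bool ⧸ K := π (a⁻¹ * (c ^ n)⁻¹ * a * c ^ n) with hv
  have hu_c : u ∈ Subgroup.center _ := hcentral _ hUmem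
  have hv_c : v ∈ Subgroup.center _ := hcentral _ hVmem
  -- the second relator maps to 1 in the quotient
  have hv1 : v = 1 := by
    -- two homomorphisms from the free group agreeing on generators
    set f₁ : FreeGroup Bool →* FreeGroup Bool ⧸ K :=
      (MulAut.conj ((π c ^ n)⁻¹)).toMonoidHom.comp π with hf₁
    set f₂ : FreeGroup Bool →* FreeGroup Bool ⧸ K :=
      { toFun := fun w => π w * v ^ (Multiplicative.toAdd (sigma w))
        map_one' := by simp
        map_mul' := by
          intro x y
          simp only [map_mul]
          rw [toAdd_mul, zpow_add]
          have := (Subgroup.mem_center_iff.1 hv_c)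
          calc π x * π y * (v ^ Multiplicative.toAdd (sigma x) *
                v ^ Multiplicative.toAdd (sigma y))
              = π x * (π y * v ^ Multiplicative.toAdd (sigma x)) *
                v ^ Multiplicative.toAdd (sigma y) := by group
            _ = π x * (v ^ Multiplicative.toAdd (sigma x) * π y) *
                v ^ Multiplicative.toAdd (sigma y) := by
                rw [Subgroup.mem_center_iff.1 (Subgroup.zpow_mem _ hv_c _) (π y)]
            _ = π x * v ^ Multiplicative.toAdd (sigma x) *
                (π y * v ^ Multiplicative.toAdd (sigma y)) := by group } with hf₂
    have hfeq : f₁ = f₂ := by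
      apply FreeGroup.ext_hom
      intro b
      cases b with
      | true =>
        show (π c ^ n)⁻¹ * π a * ((π c ^ n)⁻¹)⁻¹ = π a * v ^ (Multiplicative.toAdd (sigma a))
        rw [sigma_a, toAdd_ofAdd, zpow_one]
        have : v = (π a)⁻¹ * (π c ^ n)⁻¹ * π a * π c ^ n := by
          rw [hv]; simp [map_mul, map_inv, map_pow]
        rw [this]
        group
      | false =>
        show (π c ^ n)⁻¹ * π c * ((π c ^ n)⁻¹)⁻¹ = π c * v ^ (Multiplicative.toAdd (sigma c))
        rw [sigma_c, toAdd_one, zpow_zero, mul_one]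
        group
    have happ := DFunLike.congr_fun hfeq (Uword k α γ)
    have hLHS : f₁ (Uword k α γ) = u := by
      show (π c ^ n)⁻¹ * u * ((π c ^ n)⁻¹)⁻¹ = u
      rw [Subgroup.mem_center_iff.1 hu_c ((π c ^ n)⁻¹)]
      group
    have hRHS : f₂ (Uword k α γ) = u * v := by
      show u * v ^ (Multiplicative.toAdd (sigma (Uword k α γ))) = u * v
      rw [sigma_Uword, hα]
      simp
    rw [hLHS, hRHS] at happ
    exact (left_eq_mul.1 happ)
  -- the image of R in the quotient is the cyclic group generated by u
  have hmapR : R.map π ≤ Subgroup.zpowers u := by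
    rw [hRdef, Subgroup.map_normalClosure _ _ hπsurj]
    have hznormal : (Subgroup.zpowers u).Normal := by
      constructor
      intro x hx g
      rwa [Subgroup.mem_center_iff.1
        ((Subgroup.zpowers_le.2 hu_c : Subgroup.zpowers u ≤ Subgroup.center _) hx) g,
        mul_assoc, mul_inv_cancel, mul_one]
    refine Subgroup.normalClosure_le_normal ?_
    intro x hx
    rcases hx with ⟨w, hw, rfl⟩
    rcases hw with hw | hw
    · rw [hw]; exact Subgroup.mem_zpowers u
    · rw [Set.mem_singleton_iff] at hw
      rw [hw]
      show π (a⁻¹ * (c ^ n)⁻¹ * a * c ^ n) ∈ _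
      rw [← hv, hv1]
      exact Subgroup.one_mem _
  -- now prove the equality
  apply le_antisymm
  · rintro w ⟨hwR, hwC⟩
    have hπw : π w ∈ Subgroup.zpowers u := hmapR ⟨w, hwR, rfl⟩
    rcases Subgroup.mem_zpowers_iff.1 hπw with ⟨m, hm⟩
    have hKcomm : K ≤ commutator (FreeGroup Bool) := by
      rw [commutator_def]; exact Subgroup.commutator_mono le_rfl le_top
    -- σ (Uword^m * w⁻¹) = 1 since Uword^m * w⁻¹ ∈ K ≤ [F,F]
    have hmemK : Uword k α γ ^ m * w⁻¹ ∈ K := by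
      have hπ1 : π (Uword k α γ ^ m * w⁻¹) = 1 := by
        rw [map_mul, map_zpow, map_inv, ← hu, hm]
        group
      exact (QuotientGroup.eq_one_iff _).1 hπ1
    have h1 : sigma (Uword k α γ ^ m * w⁻¹) = 1 := commutator_le_ker (hKcomm hmemK)
    have h2 : sigma w = 1 := commutator_le_ker hwC
    rw [map_mul, map_zpow, map_inv, h2, inv_one, mul_one, sigma_Uword, hα] at h1
    have hm0 : m = 0 := by
      have : Multiplicative.ofAdd (m * 1) = (1 : Multiplicative ℤ) := by
        rw [← h1]; rw [← ofAdd_zsmul]; norm_num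
      simpa using this
    subst hm0
    rw [zpow_zero] at hm
    have : π w = 1 := hm.symm
    exact (QuotientGroup.eq_one_iff _).1 this
  · exact le_inf (Subgroup.commutator_le_right ⊤ R)
      (by rw [commutator_def]; exact Subgroup.commutator_mono le_rfl le_top)
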